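/- There exist constants 0 < c₁ ≤ c₂ (depending only on δ and ε, and in particular independent of ξ, σ, z, w) such that for every ξ ∈ ℝⁿ with |ξ| ≥ ε, every σ ∈ ℝ, and all complex numbers z, w: c₁·E₁ ≤ E ≤ c₂·E₁. -/

import Mathlib

/-- The auxiliary multiplier `ρ(ξ)` used in the high frequency region. -/
noncomputable def rho (n : ℕ) (δ α θ ε : ℝ) (ξ : EuclideanSpace ℝ (Fin n)) : ℝ :=
  if 2 * θ ≤ α + δ then
    ε ^ (2 * α + 2 * δ - 4 * θ) * ‖ξ‖ ^ (2 * θ) / (2 * (1 + ‖ξ‖ ^ (2 * δ)))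
  else
    ε ^ (-2 * α + 4 * θ) * ‖ξ‖ ^ (2 * α - 2 * θ) / 4

lemma amgm (K P Q x y : ℝ) (hK : 0 ≤ K) (hP : 0 ≤ P) (hQ : 0 ≤ Q)
    (hx : 0 ≤ x) (hy : 0 ≤ y) (h : 4 * K ^ 2 ≤ P * Q) :
    K * (x * y) ≤ 1 / 4 * (P * x ^ 2) + 1 / 4 * (Q * y ^ 2) := by
  set a := Real.sqrt P with ha
  set b := Real.sqrt Q with hb
  have ha2 : a ^ 2 = P := Real.sq_sqrt hP
  have hb2 : b ^ 2 = Q := Real.sq_sqrt hQ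
  have ha0 : 0 ≤ a := Real.sqrt_nonneg _
  have hb0 : 0 ≤ b := Real.sqrt_nonneg _
  have hab : 2 * K ≤ a * b := by
    nlinarith [mul_nonneg ha0 hb0]
  nlinarith [sq_nonneg (a * x - b * y), mul_nonneg (mul_nonneg ha0 hb0) (mul_nonneg hx hy),
    mul_nonneg hx hy]

lemma rho_bounds (n : ℕ) (δ α θ ε : ℝ) (hδ : 0 ≤ δ) (hα : 0 ≤ α) (hθ0 : 0 ≤ θ)
    (hθα : θ ≤ α) (hε0 : 0 < ε) (hε1 : ε < 1) (ξ : EuclideanSpace ℝ (Fin n))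
    (hξ : ε ≤ ‖ξ‖) :
    0 ≤ rho n δ α θ ε ξ ∧
    rho n δ α θ ε ξ * (2 * (1 + ‖ξ‖ ^ (2 * δ))) ≤ ‖ξ‖ ^ (2 * θ) ∧
    rho n δ α θ ε ξ * 2 ≤ ‖ξ‖ ^ (2 * α - 2 * θ) := by
  set r := ‖ξ‖ with hrdef
  have hr0 : 0 < r := lt_of_lt_of_le hε0 hξ
  have hV0 : 0 < r ^ (2 * δ) := Real.rpow_pos_of_pos hr0 _
  have hD0 : (0:ℝ) < 2 * (1 + r ^ (2 * δ)) := by linarith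
  unfold rho
  split_ifs with h
  · have he1 : 0 ≤ 2 * α + 2 * δ - 4 * θ := by linarith
    have hε_le : ε ^ (2 * α + 2 * δ - 4 * θ) ≤ 1 :=
      Real.rpow_le_one hε0.le hε1.le he1
    have hεr : ε ^ (2 * α + 2 * δ - 4 * θ) ≤ r ^ (2 * α + 2 * δ - 4 * θ) :=
      Real.rpow_le_rpow hε0.le hξ he1
    have hεpos : 0 < ε ^ (2 * α + 2 * δ - 4 * θ) := Real.rpow_pos_of_pos hε0 _
    have hT0 : 0 < r ^ (2 * θ) := Real.rpow_pos_of_pos hr0 _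
    refine ⟨by positivity, ?_, ?_⟩
    · rw [div_mul_cancel₀ _ hD0.ne']
      nlinarith
    · rw [div_mul_eq_mul_div, div_le_iff₀ hD0]
      have key : r ^ (2 * α + 2 * δ - 4 * θ) * r ^ (2 * θ) ≤
          r ^ (2 * α - 2 * θ) * r ^ (2 * δ) := by
        rw [← Real.rpow_add hr0, ← Real.rpow_add hr0]
        apply le_of_eq; ring_nf
      have hW0 : 0 < r ^ (2 * α - 2 * θ) := Real.rpow_pos_of_pos hr0 _
      nlinarith
  · push_neg at h
    have he2 : 0 ≤ -2 * α + 4 * θ := by linarith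
    have he3 : 0 ≤ -2 * α + 4 * θ - 2 * δ := by linarith
    have hε_le : ε ^ (-2 * α + 4 * θ) ≤ 1 := Real.rpow_le_one hε0.le hε1.le he2
    have hεpos : 0 < ε ^ (-2 * α + 4 * θ) := Real.rpow_pos_of_pos hε0 _
    have hW0 : 0 < r ^ (2 * α - 2 * θ) := Real.rpow_pos_of_pos hr0 _
    refine ⟨by positivity, ?_, ?_⟩
    · -- ε^{e₂} r^{2α-2θ} (1+r^{2δ}) ≤ 2 r^{2θ}
      rw [div_mul_eq_mul_div]
      rw [div_le_iff₀ (by norm_num : (0:ℝ) < 4)]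
      have h1 : ε ^ (-2 * α + 4 * θ) * r ^ (2 * α - 2 * θ) ≤ r ^ (2 * θ) := by
        have this : ε ^ (-2 * α + 4 * θ) ≤ r ^ (-2 * α + 4 * θ) :=
          Real.rpow_le_rpow hε0.le hξ he2
        calc ε ^ (-2 * α + 4 * θ) * r ^ (2 * α - 2 * θ)
            ≤ r ^ (-2 * α + 4 * θ) * r ^ (2 * α - 2 * θ) := by gcongr
          _ = r ^ (2 * θ) := by rw [← Real.rpow_add hr0]; ring_nf
      have h2 : ε ^ (-2 * α + 4 * θ) * r ^ (2 * α - 2 * θ) * r ^ (2 * δ) ≤ r ^ (2 * θ) := by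
        have ha : ε ^ (-2 * α + 4 * θ) ≤ ε ^ (-2 * α + 4 * θ - 2 * δ) :=
          Real.rpow_le_rpow_of_exponent_ge hε0 hε1.le (by linarith)
        have hb : ε ^ (-2 * α + 4 * θ - 2 * δ) ≤ r ^ (-2 * α + 4 * θ - 2 * δ) :=
          Real.rpow_le_rpow hε0.le hξ he3
        calc ε ^ (-2 * α + 4 * θ) * r ^ (2 * α - 2 * θ) * r ^ (2 * δ)
            ≤ r ^ (-2 * α + 4 * θ - 2 * δ) * r ^ (2 * α - 2 * θ) * r ^ (2 * δ) := by
              gcongr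
              exact le_trans ha hb
          _ = r ^ (2 * θ) := by rw [← Real.rpow_add hr0, ← Real.rpow_add hr0]; ring_nf
      nlinarith
    · rw [div_mul_eq_mul_div, div_le_iff₀ (by norm_num : (0:ℝ) < 4)]
      nlinarith

set_option maxHeartbeats 1000000 in
theorem stmt_14 (n : ℕ) (hn : 1 ≤ n) (δ α θ ε : ℝ)
    (hδ : 0 ≤ δ) (hα : 0 ≤ α) (hθ0 : 0 ≤ θ) (hθα : θ ≤ α)
    (hε0 : 0 < ε) (hε1 : ε < 1) :
    ∃ c₁ c₂ : ℝ, 0 < c₁ ∧ c₁ ≤ c₂ ∧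
      ∀ ξ : EuclideanSpace ℝ (Fin n), ε ≤ ‖ξ‖ → ∀ σ : ℝ, ∀ z w : ℂ,
        c₁ * (1 / 2 * ‖ξ‖ ^ (2 * δ + σ) * ‖w‖ ^ 2
              + 1 / 2 * ‖ξ‖ ^ (2 * α + σ) * ‖z‖ ^ 2)
            ≤ 1 / 2 * (1 + ‖ξ‖ ^ (2 * δ)) * ‖ξ‖ ^ σ * ‖w‖ ^ 2
              + 1 / 2 * ‖ξ‖ ^ (2 * α + σ) * ‖z‖ ^ 2
              + rho n δ α θ ε ξ * (1 + ‖ξ‖ ^ (2 * δ)) * ‖ξ‖ ^ σ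
                  * (w * starRingEnd ℂ z).re
              + 1 / 2 * rho n δ α θ ε ξ * ‖ξ‖ ^ (2 * θ + σ) * ‖z‖ ^ 2 ∧
          1 / 2 * (1 + ‖ξ‖ ^ (2 * δ)) * ‖ξ‖ ^ σ * ‖w‖ ^ 2
              + 1 / 2 * ‖ξ‖ ^ (2 * α + σ) * ‖z‖ ^ 2
              + rho n δ α θ ε ξ * (1 + ‖ξ‖ ^ (2 * δ)) * ‖ξ‖ ^ σ
                  * (w * starRingEnd ℂ z).re
              + 1 / 2 * rho n δ α θ ε ξ * ‖ξ‖ ^ (2 * θ + σ) * ‖z‖ ^ 2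
            ≤ c₂ * (1 / 2 * ‖ξ‖ ^ (2 * δ + σ) * ‖w‖ ^ 2
              + 1 / 2 * ‖ξ‖ ^ (2 * α + σ) * ‖z‖ ^ 2) := by
  have hG0 : 0 < ε ^ (-(2 * δ)) := Real.rpow_pos_of_pos hε0 _
  have hG1 : 1 ≤ ε ^ (-(2 * δ)) :=
    Real.one_le_rpow_of_pos_of_le_one_of_nonpos hε0 hε1.le (by linarith)
  refine ⟨1 / 2, 2 * (1 + ε ^ (-(2 * δ))), by norm_num, by linarith, ?_⟩
  intro ξ hξ σ z w
  obtain ⟨hρ0, hρ1, hρ2⟩ := rho_bounds n δ α θ ε hδ hα hθ0 hθα hε0 hε1 ξ hξ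
  set r := ‖ξ‖ with hrdef
  set ρ := rho n δ α θ ε ξ with hρdef
  have hr0 : 0 < r := lt_of_lt_of_le hε0 hξ
  set G := ε ^ (-(2 * δ)) with hGdef
  set V := r ^ (2 * δ) with hVdef
  set U := r ^ (2 * α) with hUdef
  set T := r ^ (2 * θ) with hTdef
  set W := r ^ (2 * α - 2 * θ) with hWdef
  set s := r ^ σ with hsdef
  have hV0 : 0 < V := Real.rpow_pos_of_pos hr0 _
  have hU0 : 0 < U := Real.rpow_pos_of_pos hr0 _
  have hT0 : 0 < T := Real.rpow_pos_of_pos hr0 _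
  have hW0 : 0 < W := Real.rpow_pos_of_pos hr0 _
  have hs0 : 0 < s := Real.rpow_pos_of_pos hr0 _
  have hTW : T * W = U := by
    rw [hTdef, hWdef, hUdef, ← Real.rpow_add hr0]; ring_nf
  have hGV : 1 ≤ G * V := by
    have h1 : G * ε ^ (2 * δ) = 1 := by
      rw [hGdef, ← Real.rpow_add hε0]; simp
    have h2 : ε ^ (2 * δ) ≤ V := Real.rpow_le_rpow hε0.le hξ (by linarith)
    have h3 := mul_le_mul_of_nonneg_left h2 hG0.le
    linarith
  have hsplit1 : r ^ (2 * δ + σ) = V * s := by rw [hVdef, hsdef, ← Real.rpow_add hr0]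
  have hsplit2 : r ^ (2 * α + σ) = U * s := by rw [hUdef, hsdef, ← Real.rpow_add hr0]
  have hsplit3 : r ^ (2 * θ + σ) = T * s := by rw [hTdef, hsdef, ← Real.rpow_add hr0]
  rw [hsplit1, hsplit2, hsplit3]
  set x := ‖w‖ with hxdef
  set y := ‖z‖ with hydef
  have hx : 0 ≤ x := norm_nonneg w
  have hy : 0 ≤ y := norm_nonneg z
  -- cross term control
  have hre : |(w * starRingEnd ℂ z).re| ≤ x * y := by
    calc |(w * starRingEnd ℂ z).re| ≤ ‖w * starRingEnd ℂ z‖ :=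
          Complex.abs_re_le_norm _
      _ = x * y := by rw [norm_mul, Complex.norm_conj]
  obtain ⟨hre1, hre2⟩ := abs_le.mp hre
  have hK0 : 0 ≤ ρ * (1 + V) * s := by positivity
  have hkey : 4 * ((ρ * (1 + V) * s) ^ 2) ≤ ((1 + V) * s) * (U * s) := by
    have h3 : (ρ * (2 * (1 + V))) * (ρ * 2) ≤ T * W :=
      mul_le_mul hρ1 hρ2 (by positivity) hT0.le
    have h4 : 4 * ρ ^ 2 * (1 + V) ≤ U := by rw [← hTW]; linarith [h3]
    have h5 := mul_le_mul_of_nonneg_right h4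
      (mul_nonneg (mul_nonneg (by positivity : (0:ℝ) ≤ 1 + V) hs0.le) hs0.le)
    linarith [h5]
  have hamgm : (ρ * (1 + V) * s) * (x * y) ≤
      1 / 4 * (((1 + V) * s) * x ^ 2) + 1 / 4 * ((U * s) * y ^ 2) :=
    amgm _ _ _ _ _ hK0 (by positivity) (by positivity) hx hy hkey
  have hcross_lo : -(1 / 4 * (((1 + V) * s) * x ^ 2) + 1 / 4 * ((U * s) * y ^ 2)) ≤
      ρ * (1 + V) * s * (w * starRingEnd ℂ z).re := by
    have h1 : ρ * (1 + V) * s * (-(x * y)) ≤ ρ * (1 + V) * s * (w * starRingEnd ℂ z).re :=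
      mul_le_mul_of_nonneg_left hre1 hK0
    linarith [hamgm, h1]
  have hcross_hi : ρ * (1 + V) * s * (w * starRingEnd ℂ z).re ≤
      1 / 4 * (((1 + V) * s) * x ^ 2) + 1 / 4 * ((U * s) * y ^ 2) := by
    have h1 : ρ * (1 + V) * s * (w * starRingEnd ℂ z).re ≤ ρ * (1 + V) * s * (x * y) :=
      mul_le_mul_of_nonneg_left hre2 hK0
    linarith
  have hlast0 : 0 ≤ 1 / 2 * ρ * (T * s) * y ^ 2 := by positivity
  have hlast_hi : 1 / 2 * ρ * (T * s) * y ^ 2 ≤ 1 / 4 * ((U * s) * y ^ 2) := by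
    have h1 : ρ * 2 * T ≤ W * T := mul_le_mul_of_nonneg_right hρ2 hT0.le
    have h2 : ρ * T ≤ 1 / 2 * U := by linarith [hTW, h1]
    have h3 := mul_le_mul_of_nonneg_right h2 (mul_nonneg hs0.le (sq_nonneg y))
    linarith [h3]
  constructor
  · have hm : 0 ≤ s * x ^ 2 := by positivity
    linarith [hcross_lo, hlast0, hm]
  · have hm : 0 ≤ s * x ^ 2 := by positivity
    have hm1 : 1 * (s * x ^ 2) ≤ G * V * (s * x ^ 2) := mul_le_mul_of_nonneg_right hGV hm
    have hm2 : 0 ≤ V * (s * x ^ 2) := by positivity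
    have hm3 : 0 ≤ G * (V * (s * x ^ 2)) := by positivity
    have hm4 : 0 ≤ G * (U * (s * y ^ 2)) := by positivity
    linarith [hcross_hi, hlast_hi, hm1, hm2, hm3, hm4]
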